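/- Let n ≥ 1 be an integer and let 0 < ε < 1. Then there exists a polynomial p ∈ ℂ[X] of degree exactly n with leading coefficient (3n)^n/(2^{n+1}·n!) such that for every z ∈ ℂ: e^{3nz}·(1/(2πi))·∮_{|w+1|=ε} e^{3nzw}/(w(w² − 1))^{n+1} dw = p(z), the integral being over the positively oriented circle of radius ε centered at −1. -/

import Mathlib

open Polynomial Finset Metric Set
open scoped ContDiff

private lemma iteratedDerivWithin_isOpen' {s : Set ℂ} (hs : IsOpen s) {x : ℂ} (hx : x ∈ s)
    (n : ℕ) (f : ℂ → ℂ) : iteratedDerivWithin n f s x = iteratedDeriv n f x := by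
  rw [iteratedDerivWithin_eq_iteratedFDerivWithin, iteratedDeriv_eq_iteratedFDeriv,
    iteratedFDerivWithin_of_isOpen n hs hx]

private lemma leibniz_exp {s : Set ℂ} (hs : IsOpen s) (c : ℂ) :
    ∀ (m : ℕ) (h : ℂ → ℂ), ContDiffOn ℂ ∞ h s → ∀ x ∈ s,
      iteratedDerivWithin m (fun w => Complex.exp (c * w) * h w) s x =
        ∑ k ∈ Finset.range (m + 1),
          (m.choose k : ℂ) * c ^ k * Complex.exp (c * x) * iteratedDerivWithin (m - k) h s x := by
  have hu : UniqueDiffOn ℂ s := hs.uniqueDiffOn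
  intro m
  induction m with
  | zero =>
    intro h hh x hx
    simp [iteratedDerivWithin_zero]
  | succ m ih =>
    intro h hh x hx
    have hle : ∀ j : ℕ, (j : WithTop ℕ∞) ≤ ∞ := fun j => by
      exact_mod_cast (le_top : (j : ℕ∞) ≤ ⊤)
    have hdh : ContDiffOn ℂ ∞ (derivWithin h s) s := hh.derivWithin hu (by simp)
    have hH : ContDiffOn ℂ ∞ (fun w => c * h w + derivWithin h s w) s :=
      (contDiffOn_const.mul hh).add hdh
    have key : Set.EqOn (derivWithin (fun w => Complex.exp (c * w) * h w) s)
        (fun w => Complex.exp (c * w) * (c * h w + derivWithin h s w)) s := by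
      intro y hy
      have h1 : DifferentiableWithinAt ℂ (fun w => Complex.exp (c * w)) s y :=
        (Complex.differentiable_exp.comp ((differentiable_id.const_mul c))).differentiableAt.differentiableWithinAt
      have h2 : DifferentiableWithinAt ℂ h s y :=
        (hh y hy).differentiableWithinAt (by simp)
      rw [derivWithin_fun_mul h1 h2]
      have hde : derivWithin (fun w => Complex.exp (c * w)) s y = c * Complex.exp (c * y) := by
        rw [derivWithin_of_isOpen hs hy]
        simpa [mul_comm] using (((hasDerivAt_id y).const_mul c).cexp).deriv
      rw [hde]; ring
    rw [iteratedDerivWithin_succ', iteratedDerivWithin_congr key hx, ih _ hH x hx]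
    have hsum : ∀ k ∈ Finset.range (m + 1),
        (m.choose k : ℂ) * c ^ k * Complex.exp (c * x) *
            iteratedDerivWithin (m - k) (fun w => c * h w + derivWithin h s w) s x =
          (m.choose k : ℂ) * c ^ k * Complex.exp (c * x) *
            (c * iteratedDerivWithin (m - k) h s x + iteratedDerivWithin (m - k + 1) h s x) := by
      intro k hk
      have hadd : iteratedDerivWithin (m - k) (fun w => c * h w + derivWithin h s w) s x =
          iteratedDerivWithin (m - k) (fun w => c * h w) s x
            + iteratedDerivWithin (m - k) (derivWithin h s) s x := by
        exact iteratedDerivWithin_add hx hu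
          (((contDiffOn_const.mul hh).of_le (hle _)) x hx) ((hdh.of_le (hle _)) x hx)
      rw [hadd, iteratedDerivWithin_const_mul hx hu c ((hh.of_le (hle _)) x hx),
        ← iteratedDerivWithin_succ']
    rw [Finset.sum_congr rfl hsum]
    -- now pure algebra with sums and binomial coefficients
    have hrw : ∀ k ∈ Finset.range (m + 1), m - k + 1 = m + 1 - k := fun k hk =>
      (Nat.succ_sub (Nat.lt_succ_iff.mp (Finset.mem_range.mp hk))).symm
    set E := Complex.exp (c * x) with hE
    set g : ℕ → ℂ := fun j => iteratedDerivWithin j h s x with hg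
    calc ∑ k ∈ Finset.range (m + 1),
          (m.choose k : ℂ) * c ^ k * E * (c * g (m - k) + g (m - k + 1))
        = (∑ k ∈ Finset.range (m + 1), (m.choose k : ℂ) * c ^ (k + 1) * E * g (m - k))
            + ∑ k ∈ Finset.range (m + 1), (m.choose k : ℂ) * c ^ k * E * g (m + 1 - k) := by
          rw [← Finset.sum_add_distrib]
          refine Finset.sum_congr rfl fun k hk => ?_
          rw [← hrw k hk]; ring
      _ = (∑ k ∈ Finset.range (m + 1), (m.choose k : ℂ) * c ^ (k + 1) * E * g (m - k))
            + ((∑ k ∈ Finset.range m, (m.choose (k + 1) : ℂ) * c ^ (k + 1) * E * g (m - k))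
              + E * g (m + 1)) := by
          congr 1
          rw [Finset.sum_range_succ' (fun k => (m.choose k : ℂ) * c ^ k * E * g (m + 1 - k)) m]
          simp
      _ = (∑ k ∈ Finset.range (m + 1), (m.choose k : ℂ) * c ^ (k + 1) * E * g (m - k))
            + ((∑ k ∈ Finset.range (m + 1), (m.choose (k + 1) : ℂ) * c ^ (k + 1) * E * g (m - k))
              + E * g (m + 1)) := by
          rw [Finset.sum_range_succ (fun k => (m.choose (k + 1) : ℂ) * c ^ (k + 1) * E * g (m - k)) m]
          simp
      _ = ∑ k ∈ Finset.range (m + 2),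
            ((m + 1).choose k : ℂ) * c ^ k * E * g (m + 1 - k) := by
          rw [Finset.sum_range_succ' (fun k => ((m + 1).choose k : ℂ) * c ^ k * E * g (m + 1 - k)) (m + 1)]
          simp only [Nat.choose_succ_succ, Nat.succ_eq_add_one, Nat.cast_add,
            Nat.succ_sub_succ_eq_sub, Nat.choose_zero_right, Nat.cast_one, pow_zero, one_mul,
            Nat.sub_zero, add_mul, Finset.sum_add_distrib]
          ring

theorem Pn_is_polynomial (n : ℕ) (hn : 1 ≤ n) (ε : ℝ) (hε0 : 0 < ε) (hε1 : ε < 1) :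
    ∃ p : ℂ[X], p.degree = (n : ℕ) ∧
      p.leadingCoeff = (3 * (n : ℂ)) ^ n / (2 ^ (n + 1) * (n.factorial : ℂ)) ∧
      ∀ z : ℂ,
        Complex.exp (3 * (n : ℂ) * z) * (1 / (2 * Real.pi * Complex.I)) *
          (∮ w in C(-1, ε), Complex.exp (3 * (n : ℂ) * z * w) / (w * (w ^ 2 - 1)) ^ (n + 1)) =
        p.eval z := by
  classical
  set a : ℂ := 3 * (n : ℂ) with ha
  set s : Set ℂ := {(0 : ℂ), 1}ᶜ with hsdef
  have hs : IsOpen s := (Set.toFinite {(0:ℂ),1}).isClosed.isOpen_compl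
  set h : ℂ → ℂ := fun w => ((w * (w - 1)) ^ (n + 1))⁻¹ with hhdef
  have hmem : ∀ w : ℂ, dist w (-1) ≤ ε → w ∈ s := by
    intro w hw
    simp only [hsdef, Set.mem_compl_iff, Set.mem_insert_iff, Set.mem_singleton_iff, not_or]
    constructor
    · rintro rfl
      rw [Complex.dist_eq] at hw
      simp at hw
      linarith
    · rintro rfl
      rw [Complex.dist_eq] at hw
      norm_num at hw
      linarith
  have hm1 : (-1 : ℂ) ∈ s := by
    simp only [hsdef, Set.mem_compl_iff, Set.mem_insert_iff, Set.mem_singleton_iff, not_or]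
    norm_num
  have hne : ∀ w ∈ s, (w * (w - 1)) ^ (n + 1) ≠ 0 := by
    intro w hw
    simp only [hsdef, Set.mem_compl_iff, Set.mem_insert_iff, Set.mem_singleton_iff, not_or] at hw
    exact pow_ne_zero _ (mul_ne_zero hw.1 (sub_ne_zero.mpr hw.2))
  have hdh : DifferentiableOn ℂ h s := by
    apply DifferentiableOn.inv
    · exact ((differentiableOn_id.mul (differentiableOn_id.sub (differentiableOn_const 1))).pow _)
    · exact hne
  have hch : ContDiffOn ℂ ∞ h s := hdh.contDiffOn hs
  -- the polynomial
  set d : ℕ → ℂ := fun k => iteratedDerivWithin (n - k) h s (-1) with hd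
  set p : ℂ[X] := ∑ k ∈ Finset.range (n + 1),
      Polynomial.C ((n.choose k : ℂ) * a ^ k * d k / (n.factorial : ℂ)) * X ^ k with hp
  have hdn : d n = ((2 : ℂ) ^ (n + 1))⁻¹ := by
    simp only [hd, Nat.sub_self, iteratedDerivWithin_zero, hhdef]
    norm_num
  have hcoeff : p.coeff n = (n.choose n : ℂ) * a ^ n * d n / (n.factorial : ℂ) := by
    rw [hp, Polynomial.finset_sum_coeff]
    simp [Polynomial.coeff_C_mul_X_pow]
  have hane : a ^ n ≠ 0 := pow_ne_zero _ (by
    simp only [ha]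
    exact mul_ne_zero (by norm_num) (Nat.cast_ne_zero.mpr (by omega)))
  have hcne : p.coeff n ≠ 0 := by
    rw [hcoeff, Nat.choose_self, Nat.cast_one, one_mul, hdn]
    apply div_ne_zero
    · exact mul_ne_zero hane (inv_ne_zero (pow_ne_zero _ two_ne_zero))
    · exact Nat.cast_ne_zero.mpr n.factorial_ne_zero
  have hdegle : p.degree ≤ n := by
    rw [hp]
    refine (Polynomial.degree_sum_le _ _).trans ?_
    refine Finset.sup_le fun k hk => ?_
    refine (Polynomial.degree_C_mul_X_pow_le _ _).trans ?_
    exact_mod_cast Nat.cast_le.mpr (Nat.lt_succ_iff.mp (Finset.mem_range.mp hk))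
  have hdeg : p.degree = n := Polynomial.degree_eq_of_le_of_coeff_ne_zero hdegle hcne
  refine ⟨p, hdeg, ?_, ?_⟩
  · rw [Polynomial.leadingCoeff, Polynomial.natDegree_eq_of_degree_eq_some hdeg, hcoeff,
      Nat.choose_self, Nat.cast_one, one_mul, hdn]
    field_simp
  · intro z
    set c : ℂ := 3 * (n : ℂ) * z with hc
    set F : ℂ → ℂ := fun w => Complex.exp (c * w) * h w with hF
    have hsub : Metric.closedBall (-1 : ℂ) ε ⊆ s := fun w hw => hmem w (Metric.mem_closedBall.mp hw)
    have hFd : DifferentiableOn ℂ F (Metric.closedBall (-1 : ℂ) ε) := by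
      apply DifferentiableOn.mul
      · exact (Complex.differentiable_exp.comp (differentiable_id.const_mul c)).differentiableOn
      · exact hdh.mono hsub
    set R : NNReal := ⟨ε, hε0.le⟩ with hR
    have hFps : HasFPowerSeriesOnBall F (cauchyPowerSeries F (-1) R) (-1) R :=
      hFd.hasFPowerSeriesOnBall (by exact_mod_cast hε0)
    have key2 : (∮ w in C(-1, ε), Complex.exp (3 * (n : ℂ) * z * w) / (w * (w ^ 2 - 1)) ^ (n + 1)) =
        ∮ w in C(-1, ε), ((1 : ℂ) / (w - -1)) ^ n • (w - -1)⁻¹ • F w := by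
      refine circleIntegral.integral_congr hε0.le fun w hw => ?_
      have hws : w ∈ s := hmem w (by rw [Metric.mem_sphere.mp hw])
      have hw1 : w + 1 ≠ 0 := by
        intro hcon
        have : w = -1 := by linear_combination hcon
        rw [this] at hw
        simp [Metric.mem_sphere] at hw
        exact hε0.ne' hw.symm
      have hprod : (w * (w ^ 2 - 1)) ^ (n + 1) = (w * (w - 1)) ^ (n + 1) * (w + 1) ^ (n + 1) := by
        rw [← mul_pow]; ring_nf
      have hden := hne w hws
      simp only [smul_eq_mul, hF, hhdef]
      rw [hprod, show w - -1 = w + 1 by ring, one_div, inv_pow]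
      field_simp
      simp only [hc]
      ring
    have key1 : (cauchyPowerSeries F (-1) R n fun _ => (1 : ℂ)) =
        (2 * (Real.pi : ℂ) * Complex.I)⁻¹ •
          ∮ w in C(-1, ε), ((1 : ℂ) / (w - -1)) ^ n • (w - -1)⁻¹ • F w := by
      exact cauchyPowerSeries_apply F (-1) ε n 1
    have key3 : (n.factorial : ℂ) * (cauchyPowerSeries F (-1) R n fun _ => (1 : ℂ)) =
        iteratedDeriv n F (-1) := by
      have := hFps.factorial_smul (1 : ℂ) n
      rw [iteratedDeriv_eq_iteratedFDeriv]
      rw [← this, nsmul_eq_mul]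
    have key4 : iteratedDeriv n F (-1) =
        ∑ k ∈ Finset.range (n + 1),
          (n.choose k : ℂ) * c ^ k * Complex.exp (c * (-1)) * d k := by
      rw [← iteratedDerivWithin_isOpen' hs hm1 n F]
      exact leibniz_exp hs c n h hch (-1) hm1
    rw [key2]
    have hexp : Complex.exp (3 * (n : ℂ) * z) = Complex.exp c := by rw [hc]
    rw [hexp]
    have hLHS : Complex.exp c * (1 / (2 * (Real.pi : ℂ) * Complex.I)) *
        (∮ w in C(-1, ε), ((1 : ℂ) / (w - -1)) ^ n • (w - -1)⁻¹ • F w) =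
        Complex.exp c * (cauchyPowerSeries F (-1) R n fun _ => (1 : ℂ)) := by
      rw [key1, smul_eq_mul]
      ring
    rw [hLHS]
    have hcp : (cauchyPowerSeries F (-1) R n fun _ => (1 : ℂ)) =
        ((n.factorial : ℂ))⁻¹ * iteratedDeriv n F (-1) := by
      rw [← key3]
      rw [inv_mul_cancel_left₀ (Nat.cast_ne_zero.mpr n.factorial_ne_zero)]
    rw [hcp, key4, hp, Polynomial.eval_finset_sum]
    simp only [Polynomial.eval_mul, Polynomial.eval_C, Polynomial.eval_pow, Polynomial.eval_X]
    rw [Finset.mul_sum, Finset.mul_sum]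
    refine Finset.sum_congr rfl fun k hk => ?_
    have hck : c ^ k = a ^ k * z ^ k := by rw [hc, ha, ← mul_pow]
    have hE : Complex.exp c * Complex.exp (c * -1) = 1 := by
      rw [← Complex.exp_add, show c + c * -1 = 0 by ring, Complex.exp_zero]
    linear_combination ((↑n.factorial : ℂ)⁻¹ * ↑(n.choose k) * d k * c ^ k) * hE +
      ((↑n.factorial : ℂ)⁻¹ * ↑(n.choose k) * d k) * hck
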